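/- At the critical value v = v_{c,1}, the threshold energy v_{c,1}+2 is not an eigenvalue of h(v_{c,1}): for every canonical basis vector ψ ∈ {|m₋⟩, |m₊⟩ : m ≥ 0} ∪ {|S⟩}, lim_{x ↘ v_{c,1}+2} (x - v_{c,1} - 2)⟨ψ, R(x)ψ⟩ = 0, where R(x) = (h(v_{c,1}) - x)⁻¹; hence the eigenprojection at the threshold vanishes. -/

import Mathlib

open Filter Set

noncomputable def zeta1 (x : ℝ) : ℝ := x / 2 * (1 - Real.sqrt (1 - 4 / x ^ 2))

noncomputable def Gf (E₀ τ x v : ℝ) : ℝ := E₀ - x + τ ^ 2 * (zeta1 (x - v) + zeta1 x)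

open scoped InnerProductSpace Pointwise in
/-- For a self-adjoint bounded operator whose spectrum lies in `(-∞, lam]`,
the quadratic form is bounded by `lam`. -/
lemma stmt14_quadform_le {H : Type} [NormedAddCommGroup H] [InnerProductSpace ℂ H]
    [CompleteSpace H] [Nontrivial H] (A : H →L[ℂ] H) (hA : IsSelfAdjoint A)
    (lam : ℝ) (hlam : 0 ≤ lam) (hspec : ∀ z ∈ spectrum ℂ A, z.re ≤ lam)
    (v : H) : (⟪v, A v⟫_ℂ).re ≤ lam * ‖v‖ ^ 2 := by
  set c : ℝ := (lam - ‖A‖) / 2 with hc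
  set r : ℝ := (lam + ‖A‖) / 2 with hrdef
  have hr : 0 ≤ r := by positivity
  set B : H →L[ℂ] H := A - (c : ℂ) • 1 with hB
  have h1sa : IsSelfAdjoint ((c : ℂ) • (1 : H →L[ℂ] H)) := by
    rw [IsSelfAdjoint, star_smul, star_one, Complex.star_def, Complex.conj_ofReal]
  have hBsa : IsSelfAdjoint B := hA.sub h1sa
  have hBnorm : ‖B‖ ≤ r := by
    have h1 : spectralRadius ℂ B ≤ ENNReal.ofReal r := by
      rw [spectralRadius]
      refine iSup₂_le fun z hz => ?_
      have hzB : z ∈ spectrum ℂ A - ({(c : ℂ)} : Set ℂ) := by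
        have hBalg : B = A - algebraMap ℂ (H →L[ℂ] H) ((c : ℂ)) := by
          rw [Algebra.algebraMap_eq_smul_one]
        rw [spectrum.sub_singleton_eq A ((c : ℂ))]
        rwa [hBalg] at hz
      obtain ⟨w, hw, y, hy, hwy⟩ := Set.mem_sub.mp hzB
      rw [Set.mem_singleton_iff] at hy
      subst hy
      have hwre := hA.mem_spectrum_eq_re hw
      have hwnorm : ‖w‖ ≤ ‖A‖ := spectrum.norm_le_norm_of_mem hw
      have habs : |w.re| ≤ ‖A‖ := le_trans (Complex.abs_re_le_norm w) hwnorm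
      have hwle : w.re ≤ lam := hspec w hw
      have hz' : z = ((w.re - c : ℝ) : ℂ) := by
        rw [← hwy, Complex.ofReal_sub, ← hwre]
      have : ‖z‖ ≤ r := by
        rw [hz', Complex.norm_real, Real.norm_eq_abs]
        rw [abs_le] at habs ⊢
        constructor <;> [skip; skip] <;> simp only [hc, hrdef] <;> linarith [habs.1, habs.2]
      calc (‖z‖₊ : ENNReal) = ENNReal.ofReal ‖z‖ := by
            exact (ofReal_norm z).symm
        _ ≤ ENNReal.ofReal r := ENNReal.ofReal_le_ofReal this
    rw [hBsa.spectralRadius_eq_nnnorm] at h1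
    have := ENNReal.toReal_mono (by simp) h1
    simpa [ENNReal.toReal_ofReal hr] using this
  have hBv : B v = A v - (c : ℂ) • v := by
    simp [hB, ContinuousLinearMap.sub_apply]
  have hinner : ⟪v, A v⟫_ℂ = ⟪v, B v⟫_ℂ + (c : ℂ) * ⟪v, v⟫_ℂ := by
    rw [hBv, inner_sub_right, inner_smul_right]; ring
  have hre : (⟪v, A v⟫_ℂ).re = (⟪v, B v⟫_ℂ).re + c * ‖v‖ ^ 2 := by
    rw [hinner, Complex.add_re, Complex.mul_re, Complex.ofReal_re, Complex.ofReal_im]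
    have h1 : (⟪v, v⟫_ℂ).re = ‖v‖ ^ 2 := by
      simpa using inner_self_eq_norm_sq (𝕜 := ℂ) (x := v)
    have h2 : (⟪v, v⟫_ℂ).im = 0 := by
      exact inner_self_im (𝕜 := ℂ) v
    rw [h1, h2]; ring
  have hbd : (⟪v, B v⟫_ℂ).re ≤ r * ‖v‖ ^ 2 := by
    calc (⟪v, B v⟫_ℂ).re ≤ ‖⟪v, B v⟫_ℂ‖ := Complex.re_le_norm _
      _ ≤ ‖v‖ * ‖B v‖ := norm_inner_le_norm v (B v)
      _ ≤ ‖v‖ * (‖B‖ * ‖v‖) := by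
          gcongr; exact B.le_opNorm v
      _ ≤ ‖v‖ * (r * ‖v‖) := by gcongr
      _ = r * ‖v‖ ^ 2 := by ring
  have : c + r = lam := by rw [hc, hrdef]; ring
  nlinarith [sq_nonneg ‖v‖]

set_option maxHeartbeats 1000000 in
/-- At the critical bias `v = v_{c,1}`, the threshold energy `v_{c,1}+2` is not an
eigenvalue of `h(v_{c,1})`: for every canonical basis vector `ψ` of
`ℂ ⊕ ℓ²(ℕ) ⊕ ℓ²(ℕ)`, `(x - v_{c,1} - 2)⟨ψ, R(x)ψ⟩ → 0` as `x ↘ v_{c,1}+2`, where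
`R(x) = (h(v_{c,1}) - x)⁻¹`; hence the eigenprojection at the threshold vanishes. -/
theorem stmt14 (E₀ : ℝ) (hE : 10 ≤ E₀) :
    ∃ τ₀ > (0 : ℝ), ∀ τ : ℝ, τ ≠ 0 → |τ| ≤ τ₀ →
    ∀ vc1 : ℝ, 4 < vc1 → Gf E₀ τ (2 + vc1) vc1 = 0 →
    ∀ (H : Type) [inst1 : NormedAddCommGroup H] [inst2 : InnerProductSpace ℂ H]
      [inst3 : CompleteSpace H],
    ∀ (S : H) (e : Bool → ℕ → H),
      -- `{S} ∪ {e γ m}` is an orthonormal basis of `H = ℂ ⊕ ℓ²(ℕ₋) ⊕ ℓ²(ℕ₊)`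
      Orthonormal ℂ (fun p : Option (Bool × ℕ) => p.elim S fun q => e q.1 q.2) →
      (Submodule.span ℂ
          (Set.range fun p : Option (Bool × ℕ) => p.elim S fun q => e q.1 q.2)).topologicalClosure
        = ⊤ →
    ∀ A : H →L[ℂ] H, IsSelfAdjoint A →
      -- `A = h(v_{c,1}) = h_S + h_L + v_{c,1} Π₋ + h_T`, `false` labelling the biased lead
      A S = (E₀ : ℂ) • S + (τ : ℂ) • e false 0 + (τ : ℂ) • e true 0 →
      A (e false 0) = e false 1 + (vc1 : ℂ) • e false 0 + (τ : ℂ) • S →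
      (∀ m : ℕ, A (e false (m + 1))
          = e false (m + 2) + e false m + (vc1 : ℂ) • e false (m + 1)) →
      A (e true 0) = e true 1 + (τ : ℂ) • S →
      (∀ m : ℕ, A (e true (m + 1)) = e true (m + 2) + e true m) →
    ∀ R : ℝ → (H →L[ℂ] H),
      (∀ x : ℝ, vc1 + 2 < x →
        (A - (x : ℂ) • 1) * R x = 1 ∧ R x * (A - (x : ℂ) • 1) = 1) →
      (∀ ψ : H, (ψ = S ∨ ∃ γ m, ψ = e γ m) →
        Tendsto (fun x : ℝ => ((x - vc1 - 2 : ℝ) : ℂ) * (inner ℂ ψ (R x ψ) : ℂ))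
          (nhdsWithin (vc1 + 2) (Set.Ioi (vc1 + 2))) (nhds 0)) ∧
      (∀ u : H, A u = (((vc1 + 2 : ℝ) : ℂ)) • u → u = 0) := by
  refine ⟨1, one_pos, ?_⟩
  intro τ hτ _ vc1 hvc1 _ H _ _ _ S e horth hspan A hA hAS hAf0 hAfm hAt0 hAtm R hR
  have hτC : (τ : ℂ) ≠ 0 := by exact_mod_cast hτ
  set lam : ℝ := vc1 + 2 with hlamdef
  have hlam6 : (6 : ℝ) < lam := by rw [hlamdef]; linarith
  have hlam0 : (0 : ℝ) ≤ lam := by linarith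
  -- the basis family
  set f : Option (Bool × ℕ) → H := fun p => p.elim S fun q => e q.1 q.2 with hfdef
  have hnt : Nontrivial H := by
    refine ⟨S, 0, fun h => ?_⟩
    have h1 := horth.1 none
    rw [show f none = S from rfl, h] at h1
    simp at h1
  -- self-adjointness as an inner-product identity
  have hswap : ∀ x y : H, (inner ℂ (A x) y : ℂ) = inner ℂ x (A y) := by
    intro x y
    conv_lhs => rw [← hA.adjoint_eq]
    exact ContinuousLinearMap.adjoint_inner_left A y x
  -- Bessel: coefficients along each lead tend to zero
  have bessel : ∀ (γ : Bool) (u : H),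
      Tendsto (fun m : ℕ => (inner ℂ (e γ m) u : ℂ)) atTop (nhds 0) := by
    intro γ u
    have ho : Orthonormal ℂ (fun m : ℕ => e γ m) := by
      have hcomp : (fun m : ℕ => e γ m) = f ∘ (fun m : ℕ => some (γ, m)) := rfl
      rw [hcomp]
      exact horth.comp _ (fun a b hab => by simpa using hab)
    have hsum := ho.inner_products_summable (x := u)
    have h0 := hsum.tendsto_atTop_zero
    rw [tendsto_zero_iff_norm_tendsto_zero]
    have hfeq : (fun m : ℕ => ‖(inner ℂ (e γ m) u : ℂ)‖)
        = fun m : ℕ => Real.sqrt (‖(inner ℂ (e γ m) u : ℂ)‖ ^ 2) := by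
      funext m; rw [Real.sqrt_sq (norm_nonneg _)]
    rw [hfeq]
    simpa using h0.sqrt
  -- the kernel of `A - lam` is trivial
  have hker : ∀ u : H, A u = ((lam : ℝ) : ℂ) • u → u = 0 := by
    intro u hu
    have key : ∀ w : H, (inner ℂ (A w) u : ℂ) = ((lam : ℝ) : ℂ) * inner ℂ w u := by
      intro w; rw [hswap, hu, inner_smul_right]
    set b : ℕ → ℂ := fun m => inner ℂ (e false m) u with hbdef
    set c : ℕ → ℂ := fun m => inner ℂ (e true m) u with hcdef
    have hlamc : ((lam : ℝ) : ℂ) = (vc1 : ℂ) + 2 := by rw [hlamdef]; push_cast; ring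
    have hEb : ∀ m : ℕ, b (m + 2) + b m + (vc1 : ℂ) * b (m + 1)
        = ((lam : ℝ) : ℂ) * b (m + 1) := by
      intro m
      have h := key (e false (m + 1))
      rw [hAfm m] at h
      simp only [inner_add_left, inner_smul_left, Complex.conj_ofReal] at h
      exact h
    have hrec : ∀ m : ℕ, b (m + 2) = 2 * b (m + 1) - b m := by
      intro m
      have h := hEb m
      rw [hlamc] at h
      linear_combination h
    have hbt : Tendsto b atTop (nhds 0) := bessel false u
    have hd : ∀ m : ℕ, b (m + 1) - b m = b 1 - b 0 := by
      intro m
      induction m with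
      | zero => rfl
      | succ n ih => rw [hrec n]; linear_combination ih
    have h1 : Tendsto (fun m : ℕ => b (m + 1) - b m) atTop (nhds 0) := by
      have := (hbt.comp (tendsto_add_atTop_nat 1)).sub hbt
      simpa using this
    have hd0 : b 1 - b 0 = 0 := by
      refine tendsto_nhds_unique ?_ h1
      simp only [hd]
      exact tendsto_const_nhds
    have hbc : ∀ m : ℕ, b m = b 0 := by
      intro m
      induction m with
      | zero => rfl
      | succ n ih =>
        have := hd n
        rw [hd0, sub_eq_zero] at this
        rw [this, ih]
    have hb0 : b 0 = 0 := by
      refine tendsto_nhds_unique ?_ hbt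
      have : b = fun _ : ℕ => b 0 := funext fun m => hbc m
      rw [this]
      exact tendsto_const_nhds
    have hb : ∀ m : ℕ, b m = 0 := fun m => by rw [hbc m, hb0]
    -- the dot component vanishes
    have hEb0 : b 1 + (vc1 : ℂ) * b 0 + (τ : ℂ) * (inner ℂ S u : ℂ)
        = ((lam : ℝ) : ℂ) * b 0 := by
      have h := key (e false 0)
      rw [hAf0] at h
      simp only [inner_add_left, inner_smul_left, Complex.conj_ofReal] at h
      exact h
    have ha : (inner ℂ S u : ℂ) = 0 := by
      have := hEb0
      rw [hb 0, hb 1] at this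
      simpa [hτC] using this
    -- the unbiased lead
    have hEc0 : c 1 + (τ : ℂ) * (inner ℂ S u : ℂ) = ((lam : ℝ) : ℂ) * c 0 := by
      have h := key (e true 0)
      rw [hAt0] at h
      simp only [inner_add_left, inner_smul_left, Complex.conj_ofReal] at h
      exact h
    have hc1 : c 1 = ((lam : ℝ) : ℂ) * c 0 := by
      rw [ha, mul_zero, add_zero] at hEc0; exact hEc0
    have hEc : ∀ m : ℕ, c (m + 2) + c m = ((lam : ℝ) : ℂ) * c (m + 1) := by
      intro m
      have h := key (e true (m + 1))
      rw [hAtm m] at h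
      simp only [inner_add_left] at h
      exact h
    have hcrec : ∀ m : ℕ, c (m + 2) = ((lam : ℝ) : ℂ) * c (m + 1) - c m := by
      intro m; linear_combination hEc m
    have hnl : ‖((lam : ℝ) : ℂ)‖ = lam := by
      rw [Complex.norm_real, Real.norm_eq_abs, abs_of_pos (by linarith)]
    have hgrow : ∀ m : ℕ, 2 * ‖c m‖ ≤ ‖c (m + 1)‖ := by
      intro m
      induction m with
      | zero =>
        rw [hc1, norm_mul, hnl]
        nlinarith [norm_nonneg (c 0)]
      | succ n ih =>
        have h2 : ‖((lam : ℝ) : ℂ) * c (n + 1)‖ - ‖c n‖ ≤ ‖c (n + 2)‖ := by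
          calc ‖((lam : ℝ) : ℂ) * c (n + 1)‖ - ‖c n‖
              ≤ ‖((lam : ℝ) : ℂ) * c (n + 1) - c n‖ := norm_sub_norm_le _ _
            _ = ‖c (n + 2)‖ := by rw [← hcrec n]
        rw [norm_mul, hnl] at h2
        nlinarith [norm_nonneg (c n), norm_nonneg (c (n + 1))]
    have hmono : ∀ m : ℕ, ‖c 0‖ ≤ ‖c m‖ := by
      intro m
      induction m with
      | zero => exact le_refl _
      | succ n ih =>
        have := hgrow n
        nlinarith [norm_nonneg (c n)]
    have hct : Tendsto (fun m : ℕ => ‖c m‖) atTop (nhds 0) := by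
      simpa using (bessel true u).norm
    have hc0 : c 0 = 0 := by
      have h := ge_of_tendsto' hct hmono
      exact norm_le_zero_iff.mp h
    have hcall : ∀ m : ℕ, c m = 0 := by
      have hpair : ∀ m : ℕ, c m = 0 ∧ c (m + 1) = 0 := by
        intro m
        induction m with
        | zero => exact ⟨hc0, by rw [hc1, hc0, mul_zero]⟩
        | succ n ih => exact ⟨ih.2, by rw [hcrec n, ih.1, ih.2]; ring⟩
      exact fun m => (hpair m).1
    -- all coefficients vanish
    have hall : ∀ p : Option (Bool × ℕ), (inner ℂ (f p) u : ℂ) = 0 := by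
      intro p
      match p with
      | none => exact ha
      | some (false, m) => exact hb m
      | some (true, m) => exact hcall m
    have hmem : u ∈ (Submodule.span ℂ (Set.range f))ᗮ := by
      rw [Submodule.mem_orthogonal]
      intro v hv
      induction hv using Submodule.span_induction with
      | mem x hx =>
        obtain ⟨p, rfl⟩ := hx
        exact hall p
      | zero => exact inner_zero_left u
      | add x y _ _ hx hy => rw [inner_add_left, hx, hy, add_zero]
      | smul a x _ hx => rw [inner_smul_left, hx, mul_zero]
    have hbot : (Submodule.span ℂ (Set.range f))ᗮ = ⊥ :=
      Submodule.topologicalClosure_eq_top_iff.mp hspan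
    rw [hbot] at hmem
    exact (Submodule.mem_bot ℂ).mp hmem
  -- spectrum is contained in `(-∞, lam]`
  have hspec : ∀ z ∈ spectrum ℂ A, z.re ≤ lam := by
    intro z hz
    by_contra hzc
    push_neg at hzc
    have hzre := hA.mem_spectrum_eq_re hz
    have hunit : IsUnit (A - ((z.re : ℝ) : ℂ) • 1) := by
      exact ⟨⟨A - ((z.re : ℝ) : ℂ) • 1, R z.re,
        (hR z.re hzc).1, (hR z.re hzc).2⟩, rfl⟩
    have hcontra : IsUnit (algebraMap ℂ (H →L[ℂ] H) z - A) := by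
      rw [hzre, Algebra.algebraMap_eq_smul_one]
      have := hunit.neg
      simpa [neg_sub] using this
    exact spectrum.mem_iff.mp hz hcontra
  have hquad : ∀ v : H, ((inner ℂ v (A v) : ℂ)).re ≤ lam * ‖v‖ ^ 2 :=
    stmt14_quadform_le A hA lam hlam0 hspec
  -- key resolvent bound
  have hkey : ∀ x : ℝ, lam < x → ∀ w : H, (x - lam) * ‖R x w‖ ≤ ‖w‖ := by
    intro x hx w
    set v : H := R x w with hvdef
    have happ : A v - (x : ℂ) • v = w := by
      have h1 := (hR x hx).1
      have h2 := congrArg (fun T : H →L[ℂ] H => T w) h1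
      simpa [ContinuousLinearMap.mul_apply, ContinuousLinearMap.sub_apply,
        ContinuousLinearMap.smul_apply, ContinuousLinearMap.one_apply] using h2
    have hvim : ((inner ℂ v v : ℂ)).im = 0 := inner_self_im (𝕜 := ℂ) v
    have hvre : ((inner ℂ v v : ℂ)).re = ‖v‖ ^ 2 := by
      simpa using inner_self_eq_norm_sq (𝕜 := ℂ) (x := v)
    have h2 : ((inner ℂ v w : ℂ)).re = ((inner ℂ v (A v) : ℂ)).re - x * ‖v‖ ^ 2 := by
      rw [← happ, inner_sub_right, inner_smul_right, Complex.sub_re, Complex.mul_re,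
        Complex.ofReal_re, Complex.ofReal_im, hvre, hvim]
      ring
    have h3 : -((inner ℂ v w : ℂ)).re ≤ ‖v‖ * ‖w‖ := by
      calc -((inner ℂ v w : ℂ)).re ≤ |((inner ℂ v w : ℂ)).re| := neg_le_abs _
        _ ≤ ‖(inner ℂ v w : ℂ)‖ := Complex.abs_re_le_norm _
        _ ≤ ‖v‖ * ‖w‖ := norm_inner_le_norm v w
    have h4 : (x - lam) * ‖v‖ ^ 2 ≤ ‖v‖ * ‖w‖ := by nlinarith [hquad v]
    rcases eq_or_lt_of_le (norm_nonneg v) with h5 | h5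
    · rw [← h5, mul_zero]; exact norm_nonneg w
    · have h6 : ((x - lam) * ‖v‖) * ‖v‖ ≤ ‖w‖ * ‖v‖ := by nlinarith [h4]
      exact le_of_mul_le_mul_right h6 h5
  -- density of the range of `A - lam`
  have hdense : ∀ ψ : H, ∀ ε > (0 : ℝ),
      ∃ φ : H, ‖ψ - (A φ - ((lam : ℝ) : ℂ) • φ)‖ < ε := by
    set T : H →L[ℂ] H := A - ((lam : ℝ) : ℂ) • 1 with hTdef
    have hTapp : ∀ φ : H, T φ = A φ - ((lam : ℝ) : ℂ) • φ := by
      intro φ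
      simp [hTdef, ContinuousLinearMap.sub_apply]
    have hswapT : ∀ x y : H, (inner ℂ (T x) y : ℂ) = inner ℂ x (T y) := by
      intro x y
      rw [hTapp, hTapp, inner_sub_left, inner_sub_right, hswap, inner_smul_left,
        inner_smul_right, Complex.conj_ofReal]
    set Ran : Submodule ℂ H := LinearMap.range (T.toLinearMap) with hRan
    have horthbot : Ranᗮ = ⊥ := by
      rw [Submodule.eq_bot_iff]
      intro u hu
      have hz : ∀ φ : H, (inner ℂ (T φ) u : ℂ) = 0 := by
        intro φ
        exact ((Submodule.mem_orthogonal Ran u).mp hu) _ ⟨φ, rfl⟩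
      have hTu : T u = 0 := by
        have h0 := hz (T u)
        rw [hswapT] at h0
        exact inner_self_eq_zero.mp h0
      refine hker u ?_
      rw [hTapp] at hTu
      rw [sub_eq_zero] at hTu
      exact hTu
    have hclos : Ran.topologicalClosure = ⊤ := by
      rw [← Submodule.orthogonal_orthogonal_eq_closure, horthbot,
        Submodule.bot_orthogonal_eq_top]
    intro ψ ε hε
    have hψc : ψ ∈ closure (Ran : Set H) := by
      have : ψ ∈ Ran.topologicalClosure := by rw [hclos]; trivial
      exact this
    rw [Metric.mem_closure_iff] at hψc
    obtain ⟨w, hwmem, hwd⟩ := hψc ε hε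
    obtain ⟨φ, rfl⟩ := LinearMap.mem_range.mp hwmem
    refine ⟨φ, ?_⟩
    rw [dist_eq_norm] at hwd
    rw [← hTapp]
    exact hwd
  constructor
  · -- the limit statement
    intro ψ _
    rw [Metric.tendsto_nhdsWithin_nhds]
    intro ε hε
    obtain ⟨φ, hφ⟩ := hdense ψ (ε / (2 * (‖ψ‖ + 1))) (by positivity)
    refine ⟨min 1 (ε / (4 * (‖ψ‖ + 1) * (‖φ‖ + 1))), by positivity, ?_⟩
    intro x hxs hxd
    have hx : lam < x := hxs
    set t : ℝ := x - lam with htdef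
    have ht0 : 0 < t := by rw [htdef]; linarith
    have htd : t < min 1 (ε / (4 * (‖ψ‖ + 1) * (‖φ‖ + 1))) := by
      rw [Real.dist_eq] at hxd
      calc t ≤ |x - lam| := le_abs_self _
        _ < _ := hxd
    have ht1 : t ≤ 1 := le_of_lt (lt_of_lt_of_le htd (min_le_left _ _))
    have ht2 : t < ε / (4 * (‖ψ‖ + 1) * (‖φ‖ + 1)) := lt_of_lt_of_le htd (min_le_right _ _)
    set η : H := ψ - (A φ - ((lam : ℝ) : ℂ) • φ) with hηdef
    have hη : ‖η‖ < ε / (2 * (‖ψ‖ + 1)) := hφ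
    -- resolvent applied to the range vector
    have hRT : R x (A φ - ((lam : ℝ) : ℂ) • φ) = φ + ((t : ℝ) : ℂ) • R x φ := by
      have h2 := (hR x hx).2
      have happ : R x (A φ - (x : ℂ) • φ) = φ := by
        have h3 := congrArg (fun T : H →L[ℂ] H => T φ) h2
        simpa [ContinuousLinearMap.mul_apply, ContinuousLinearMap.sub_apply,
          ContinuousLinearMap.smul_apply, ContinuousLinearMap.one_apply] using h3
      have hsplit : A φ - ((lam : ℝ) : ℂ) • φ = (A φ - (x : ℂ) • φ) + ((t : ℝ) : ℂ) • φ := by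
        have hcast : ((t : ℝ) : ℂ) = (x : ℂ) - ((lam : ℝ) : ℂ) := by
          rw [htdef]; push_cast; ring
        rw [hcast, sub_smul]
        abel
      rw [hsplit, map_add, happ, map_smul]
    have hdecomp : (inner ℂ ψ (R x ψ) : ℂ)
        = inner ℂ ψ (R x η) + inner ℂ ψ φ + ((t : ℝ) : ℂ) * inner ℂ ψ (R x φ) := by
      have hψeq : ψ = η + (A φ - ((lam : ℝ) : ℂ) • φ) := by rw [hηdef]; abel
      calc (inner ℂ ψ (R x ψ) : ℂ)
          = inner ℂ ψ (R x (η + (A φ - ((lam : ℝ) : ℂ) • φ))) := by rw [← hψeq]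
        _ = inner ℂ ψ (R x η + (φ + ((t : ℝ) : ℂ) • R x φ)) := by rw [map_add, hRT]
        _ = inner ℂ ψ (R x η) + (inner ℂ ψ φ + inner ℂ ψ (((t : ℝ) : ℂ) • R x φ)) := by
            rw [inner_add_right, inner_add_right]
        _ = inner ℂ ψ (R x η) + inner ℂ ψ φ + ((t : ℝ) : ℂ) * inner ℂ ψ (R x φ) := by
            rw [inner_smul_right]; ring
    have hb1 : t * ‖R x η‖ ≤ ‖η‖ := hkey x hx η
    have hb2 : t * ‖R x φ‖ ≤ ‖φ‖ := hkey x hx φ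
    have hnt : ‖((t : ℝ) : ℂ)‖ = t := by
      rw [Complex.norm_real, Real.norm_eq_abs, abs_of_pos ht0]
    rw [dist_zero_right]
    have hxeq : ((x - vc1 - 2 : ℝ) : ℂ) = ((t : ℝ) : ℂ) := by
      rw [htdef, hlamdef]; push_cast; ring
    rw [hxeq, norm_mul, hnt, hdecomp]
    have hn1 : ‖(inner ℂ ψ (R x η) : ℂ)‖ ≤ ‖ψ‖ * ‖R x η‖ := norm_inner_le_norm ψ _
    have hn2 : ‖(inner ℂ ψ φ : ℂ)‖ ≤ ‖ψ‖ * ‖φ‖ := norm_inner_le_norm ψ φ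
    have hn3 : ‖(inner ℂ ψ (R x φ) : ℂ)‖ ≤ ‖ψ‖ * ‖R x φ‖ := norm_inner_le_norm ψ _
    have htri : ‖(inner ℂ ψ (R x η) : ℂ) + inner ℂ ψ φ + ((t : ℝ) : ℂ) * inner ℂ ψ (R x φ)‖
        ≤ ‖(inner ℂ ψ (R x η) : ℂ)‖ + ‖(inner ℂ ψ φ : ℂ)‖ + t * ‖(inner ℂ ψ (R x φ) : ℂ)‖ := by
      calc ‖(inner ℂ ψ (R x η) : ℂ) + inner ℂ ψ φ + ((t : ℝ) : ℂ) * inner ℂ ψ (R x φ)‖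
          ≤ ‖(inner ℂ ψ (R x η) : ℂ) + inner ℂ ψ φ‖ + ‖((t : ℝ) : ℂ) * inner ℂ ψ (R x φ)‖ :=
            norm_add_le _ _
        _ ≤ ‖(inner ℂ ψ (R x η) : ℂ)‖ + ‖(inner ℂ ψ φ : ℂ)‖ + ‖((t : ℝ) : ℂ) * inner ℂ ψ (R x φ)‖ := by
            gcongr; exact norm_add_le _ _
        _ = ‖(inner ℂ ψ (R x η) : ℂ)‖ + ‖(inner ℂ ψ φ : ℂ)‖ + t * ‖(inner ℂ ψ (R x φ) : ℂ)‖ := by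
            rw [norm_mul, hnt]
    -- final numeric estimate
    have hP : (0 : ℝ) ≤ ‖ψ‖ := norm_nonneg _
    have hF : (0 : ℝ) ≤ ‖φ‖ := norm_nonneg _
    have hRη : (0 : ℝ) ≤ ‖R x η‖ := norm_nonneg _
    have hRφ : (0 : ℝ) ≤ ‖R x φ‖ := norm_nonneg _
    have hηn : (0 : ℝ) ≤ ‖η‖ := norm_nonneg _
    have hstep1 : t * (‖(inner ℂ ψ (R x η) : ℂ)‖ + ‖(inner ℂ ψ φ : ℂ)‖ + t * ‖(inner ℂ ψ (R x φ) : ℂ)‖)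
        ≤ t * ((‖ψ‖ * ‖R x η‖) + (‖ψ‖ * ‖φ‖) + t * (‖ψ‖ * ‖R x φ‖)) := by
      have : ‖(inner ℂ ψ (R x η) : ℂ)‖ + ‖(inner ℂ ψ φ : ℂ)‖ + t * ‖(inner ℂ ψ (R x φ) : ℂ)‖
          ≤ (‖ψ‖ * ‖R x η‖) + (‖ψ‖ * ‖φ‖) + t * (‖ψ‖ * ‖R x φ‖) :=
        add_le_add (add_le_add hn1 hn2) (mul_le_mul_of_nonneg_left hn3 (le_of_lt ht0))
      exact mul_le_mul_of_nonneg_left this (le_of_lt ht0)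
    have hp1 : ‖ψ‖ * (t * ‖R x η‖) ≤ ‖ψ‖ * ‖η‖ := mul_le_mul_of_nonneg_left hb1 hP
    have hp3 : ‖ψ‖ * (t * ‖R x φ‖) ≤ ‖ψ‖ * ‖φ‖ := mul_le_mul_of_nonneg_left hb2 hP
    have hp3' : t * (‖ψ‖ * (t * ‖R x φ‖)) ≤ t * (‖ψ‖ * ‖φ‖) :=
      mul_le_mul_of_nonneg_left hp3 (le_of_lt ht0)
    calc t * ‖(inner ℂ ψ (R x η) : ℂ) + inner ℂ ψ φ + ((t : ℝ) : ℂ) * inner ℂ ψ (R x φ)‖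
        ≤ t * (‖(inner ℂ ψ (R x η) : ℂ)‖ + ‖(inner ℂ ψ φ : ℂ)‖ + t * ‖(inner ℂ ψ (R x φ) : ℂ)‖) := by
          exact mul_le_mul_of_nonneg_left htri (le_of_lt ht0)
      _ ≤ t * ((‖ψ‖ * ‖R x η‖) + (‖ψ‖ * ‖φ‖) + t * (‖ψ‖ * ‖R x φ‖)) := hstep1
      _ = ‖ψ‖ * (t * ‖R x η‖) + t * (‖ψ‖ * ‖φ‖) + t * (‖ψ‖ * (t * ‖R x φ‖)) := by ring
      _ ≤ ‖ψ‖ * ‖η‖ + t * (‖ψ‖ * ‖φ‖) + t * (‖ψ‖ * ‖φ‖) := by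
          exact add_le_add (add_le_add hp1 (le_refl _)) hp3'
      _ < ε := by
          have key1 : ‖ψ‖ * ‖η‖ < ε / 2 := by
            have h1 : ‖ψ‖ * ‖η‖ ≤ ‖ψ‖ * (ε / (2 * (‖ψ‖ + 1))) := by
              exact mul_le_mul_of_nonneg_left (le_of_lt hη) hP
            have h2 : ‖ψ‖ * (ε / (2 * (‖ψ‖ + 1))) < (‖ψ‖ + 1) * (ε / (2 * (‖ψ‖ + 1))) :=
              mul_lt_mul_of_pos_right (by linarith) (by positivity)
            have h3 : (‖ψ‖ + 1) * (ε / (2 * (‖ψ‖ + 1))) = ε / 2 := by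
              field_simp
            linarith
          have key2 : t * (‖ψ‖ * ‖φ‖) ≤ ε / 4 := by
            have h1 : t * (‖ψ‖ * ‖φ‖) ≤ (ε / (4 * (‖ψ‖ + 1) * (‖φ‖ + 1))) * ((‖ψ‖ + 1) * (‖φ‖ + 1)) := by
              apply mul_le_mul (le_of_lt ht2) (by nlinarith) (by positivity) (by positivity)
            have h2 : (ε / (4 * (‖ψ‖ + 1) * (‖φ‖ + 1))) * ((‖ψ‖ + 1) * (‖φ‖ + 1)) = ε / 4 := by
              field_simp
            linarith
          have hsum := add_lt_add_of_lt_of_le (add_lt_add_of_lt_of_le key1 key2) key2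
          exact lt_of_lt_of_eq hsum (by ring)
  · -- no eigenvector at the threshold
    intro u hu
    exact hker u hu
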